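/- Let X be a classical code complex δ0: F2^{X(0)} → F2^{X(1)} with soundness s_LTC, i.e., for all c̃0 there is a codeword h̃0 ∈ ker δ0 with (s_LTC/|X(0)|)|c̃0 − h̃0| ≤ (1/|X(1)|)|δ0 c̃0|. Let the subdivided complex X_L with injective chain maps F0, F1 (F1 δ0 = δ0' F0, F1 weight-preserving, F0 repeating each coordinate between L and (Δ_max/2)L times) be given, and suppose the generalized repetition pieces give a (β^rep, η^rep)-cleaning: for every c0 ∈ F2^{X_L(0)} there is c0^T with c0 + c0^T ∈ im F0, β^rep|c0^T| ≤ |δ0' c0| and η^rep·|δ0'(c0+c0^T)| ≤ |δ0' c0|. Then X_L has soundness s satisfying for all c0 the existence of a codeword h0 ∈ ker δ0' with |c0 − h0| ≤ (1/β^rep + (1/η^rep)·(|X(0)|/|X(1)|)·(1/s_LTC)·(Δ_max/2)·L)·|δ0' c0|. -/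

import Mathlib

lemma stmt18_arith (a b d w u K0 K1 s β η D : ℝ)
    (hs : 0 < s) (hβ : 0 < β) (hη : 0 < η) (hD : 0 ≤ D)
    (hK0 : 0 ≤ K0) (hK1 : 0 ≤ K1)
    (hβa : β * a ≤ w) (hηu : η * u ≤ w) (hb : b ≤ D * d)
    (hsnd : s / K0 * d ≤ 1 / K1 * u)
    (hd0 : K0 = 0 → d = 0)
    (hdn : 0 ≤ d) (hun : 0 ≤ u) (hwn : 0 ≤ w) (hbn : 0 ≤ b) :
    a + b ≤ (1 / β + (1 / η) * (K0 / K1) * (1 / s) * D) * w := by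
  have haw : a ≤ (1 / β) * w := by
    rw [one_div, inv_mul_eq_div, le_div_iff₀ hβ, mul_comm]; exact hβa
  have huw : u ≤ (1 / η) * w := by
    rw [one_div, inv_mul_eq_div, le_div_iff₀ hη, mul_comm]; exact hηu
  have hrhs2 : 0 ≤ (1 / η) * (K0 / K1) * (1 / s) * D * w := by positivity
  rcases eq_or_lt_of_le hK0 with h0 | h0
  · have hd : d = 0 := hd0 h0.symm
    have : b ≤ 0 := by rw [hd, mul_zero] at hb; exact hb
    nlinarith
  · rcases eq_or_lt_of_le hK1 with h1 | h1
    · have hd : d = 0 := by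
        rw [← h1, div_zero, zero_mul] at hsnd
        have := div_pos hs h0
        nlinarith
      have : b ≤ 0 := by rw [hd, mul_zero] at hb; exact hb
      nlinarith
    · have hdle : d ≤ K0 / (s * K1) * u := by
        rw [div_mul_eq_mul_div, div_le_iff₀ h0] at hsnd
        rw [div_mul_eq_mul_div, le_div_iff₀ (by positivity)]
        have h2 : s * d * K1 ≤ 1 / K1 * u * K0 * K1 :=
          mul_le_mul_of_nonneg_right hsnd h1.le
        have h3 : 1 / K1 * u * K0 * K1 = u * K0 := by field_simp
        rw [h3] at h2
        linarith
      have hble : b ≤ D * (K0 / (s * K1) * ((1 / η) * w)) := by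
        calc b ≤ D * d := hb
          _ ≤ D * (K0 / (s * K1) * u) := by
              apply mul_le_mul_of_nonneg_left hdle hD
          _ ≤ D * (K0 / (s * K1) * ((1 / η) * w)) := by
              apply mul_le_mul_of_nonneg_left _ hD
              exact mul_le_mul_of_nonneg_left huw (by positivity)
      have heq : D * (K0 / (s * K1) * ((1 / η) * w)) =
          (1 / η) * (K0 / K1) * (1 / s) * D * w := by
        field_simp
      rw [heq] at hble
      linarith [haw]


/-- Soundness of the subdivided classical code.  If X (parity-check map
δ0) has soundness s_LTC, the chain maps F0, F1 satisfy F1 δ0 = δ0' F0 with F1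
weight-preserving and F0 repeating each coordinate between L and (Δmax/2)·L times,
and the generalized repetition pieces of X_L admit a (β_rep, η_rep)-cleaning, then
for every c0 there is a codeword h0 ∈ ker δ0' with
|c0 − h0| ≤ (1/β_rep + (1/η_rep)·(|X(0)|/|X(1)|)·(1/s_LTC)·(Δmax/2)·L)·|δ0' c0|. -/
theorem stmt_18 {X0 X1 XL0 XL1 : Type}
    [Fintype X0] [Fintype X1] [Fintype XL0] [Fintype XL1]
    (δ0 : (X0 → ZMod 2) →ₗ[ZMod 2] (X1 → ZMod 2))
    (δ0' : (XL0 → ZMod 2) →ₗ[ZMod 2] (XL1 → ZMod 2))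
    (F0 : (X0 → ZMod 2) →ₗ[ZMod 2] (XL0 → ZMod 2))
    (F1 : (X1 → ZMod 2) →ₗ[ZMod 2] (XL1 → ZMod 2))
    (hF0inj : Function.Injective F0) (hF1inj : Function.Injective F1)
    (hcomm : F1 ∘ₗ δ0 = δ0' ∘ₗ F0)
    (sLTC βrep ηrep Δmax L : ℝ)
    (hs : 0 < sLTC) (hβ : 0 < βrep) (hη : 0 < ηrep) (hΔ : 0 < Δmax) (hLpos : 0 < L)
    -- F1 is weight-preserving
    (hF1w : ∀ v : X1 → ZMod 2, hammingNorm (F1 v) = hammingNorm v)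
    -- F0 repeats each coordinate between L and (Δmax/2)·L times
    (hF0lo : ∀ w : X0 → ZMod 2, L * (hammingNorm w : ℝ) ≤ (hammingNorm (F0 w) : ℝ))
    (hF0hi : ∀ w : X0 → ZMod 2,
      (hammingNorm (F0 w) : ℝ) ≤ (Δmax / 2) * L * (hammingNorm w : ℝ))
    -- soundness of X
    (hsound : ∀ c0 : X0 → ZMod 2, ∃ h0 : X0 → ZMod 2, δ0 h0 = 0 ∧
      (sLTC / (Fintype.card X0 : ℝ)) * (hammingNorm (c0 - h0) : ℝ) ≤
        (1 / (Fintype.card X1 : ℝ)) * (hammingNorm (δ0 c0) : ℝ))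
    -- (β_rep, η_rep)-cleaning from the generalized repetition pieces
    (hclean : ∀ c0 : XL0 → ZMod 2, ∃ c0T : XL0 → ZMod 2,
      (c0 + c0T) ∈ LinearMap.range F0 ∧
      βrep * (hammingNorm c0T : ℝ) ≤ (hammingNorm (δ0' c0) : ℝ) ∧
      ηrep * (hammingNorm (δ0' (c0 + c0T)) : ℝ) ≤ (hammingNorm (δ0' c0) : ℝ)) :
    ∀ c0 : XL0 → ZMod 2, ∃ h0 : XL0 → ZMod 2, δ0' h0 = 0 ∧
      (hammingNorm (c0 - h0) : ℝ) ≤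
        (1 / βrep + (1 / ηrep) * ((Fintype.card X0 : ℝ) / (Fintype.card X1 : ℝ)) *
          (1 / sLTC) * (Δmax / 2) * L) * (hammingNorm (δ0' c0) : ℝ) := by
  intro c0
  obtain ⟨c0T, ⟨ct, hct⟩, hβc, hηc⟩ := hclean c0
  obtain ⟨ht, hker, hsnd⟩ := hsound ct
  refine ⟨F0 ht, ?_, ?_⟩
  · have h := congrArg (fun f => f ht) hcomm
    simp only [LinearMap.comp_apply] at h
    rw [← h, hker, map_zero]
  · -- decomposition
    have hdec : c0 - F0 ht = c0T + F0 (ct - ht) := by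
      ext i
      have h2 : c0T i + c0T i = 0 := CharTwo.add_self_eq_zero _
      have h3 : (F0 (ct - ht)) i = c0 i + c0T i - (F0 ht) i := by
        rw [map_sub, hct]; rfl
      simp only [Pi.sub_apply, Pi.add_apply, h3]
      linear_combination -h2
    have htri : (hammingNorm (c0 - F0 ht) : ℝ) ≤
        (hammingNorm c0T : ℝ) + (hammingNorm (F0 (ct - ht)) : ℝ) := by
      rw [hdec]
      have h1 : hammingNorm (c0T + F0 (ct - ht)) ≤
          hammingNorm c0T + hammingNorm (F0 (ct - ht)) := by
        calc hammingNorm (c0T + F0 (ct - ht))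
            = hammingDist (c0T + F0 (ct - ht)) 0 := (hammingDist_zero_right _).symm
          _ ≤ hammingDist (c0T + F0 (ct - ht)) (F0 (ct - ht)) +
              hammingDist (F0 (ct - ht)) 0 := hammingDist_triangle _ _ _
          _ = hammingNorm c0T + hammingNorm (F0 (ct - ht)) := by
              rw [hammingDist_eq_hammingNorm, show -(c0T + F0 (ct - ht)) + F0 (ct - ht) = -c0T + 0 by abel,
                ← hammingDist_eq_hammingNorm, hammingDist_zero_right, hammingDist_zero_right]
      exact_mod_cast h1
    have huw : (hammingNorm (δ0 ct) : ℝ) = (hammingNorm (δ0' (c0 + c0T)) : ℝ) := by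
      have h := congrArg (fun f => f ct) hcomm
      simp only [LinearMap.comp_apply] at h
      rw [← hF1w (δ0 ct), h, hct]
    have key := stmt18_arith (hammingNorm c0T : ℝ) (hammingNorm (F0 (ct - ht)) : ℝ)
      (hammingNorm (ct - ht) : ℝ) (hammingNorm (δ0' c0) : ℝ) (hammingNorm (δ0 ct) : ℝ)
      (Fintype.card X0 : ℝ) (Fintype.card X1 : ℝ) sLTC βrep ηrep ((Δmax / 2) * L)
      hs hβ hη (by positivity) (Nat.cast_nonneg _) (Nat.cast_nonneg _)
      hβc (by rw [huw]; exact hηc) (hF0hi _) hsnd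
      (fun h0 => by
        have hz : Fintype.card X0 = 0 := by exact_mod_cast h0
        have : hammingNorm (ct - ht) = 0 :=
          Nat.le_zero.mp (hammingNorm_le_card_fintype.trans (le_of_eq hz))
        exact_mod_cast congrArg (Nat.cast (R := ℝ)) this)
      (Nat.cast_nonneg _) (Nat.cast_nonneg _) (Nat.cast_nonneg _) (Nat.cast_nonneg _)
    calc (hammingNorm (c0 - F0 ht) : ℝ)
        ≤ (hammingNorm c0T : ℝ) + (hammingNorm (F0 (ct - ht)) : ℝ) := htri
      _ ≤ (1 / βrep + (1 / ηrep) * ((Fintype.card X0 : ℝ) / (Fintype.card X1 : ℝ)) *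
            (1 / sLTC) * ((Δmax / 2) * L)) * (hammingNorm (δ0' c0) : ℝ) := key
      _ = _ := by ring
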